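/- Let n be a positive integer, let A and B be n×n row-stochastic real matrices, let 0 < c < 1, and let r_old ∈ ℝⁿ satisfy ‖r_old‖₁ = 1. Define q_offset = (1−c)·(Bᵀ − Aᵀ)·r_old. Then for every natural number k, the ℓ1 norm of the tail of the offset series satisfies ‖∑_{i=k}^∞ ((1−c)·Bᵀ)^i · q_offset‖₁ ≤ (2/c)·(1−c)^{k+1}. (Tail bound from the proof of Theorem 3.) -/

import Mathlib

open Matrix

/-- An `n × n` real matrix is row-stochastic if all its entries are nonnegative
and each of its rows sums to `1`. -/
def RowStochastic {n : ℕ} (M : Matrix (Fin n) (Fin n) ℝ) : Prop :=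
  (∀ i j, 0 ≤ M i j) ∧ ∀ i, ∑ j, M i j = 1

/-- The ℓ1 norm of a vector in `ℝⁿ`: the sum of absolute values of entries. -/
def l1norm {n : ℕ} (v : Fin n → ℝ) : ℝ := ∑ i, |v i|

lemma l1_trans_mulVec_le {n : ℕ} {M : Matrix (Fin n) (Fin n) ℝ}
    (hM : RowStochastic M) (v : Fin n → ℝ) :
    l1norm (Mᵀ.mulVec v) ≤ l1norm v := by
  unfold l1norm
  calc ∑ j, |Mᵀ.mulVec v j| ≤ ∑ j, ∑ i, M i j * |v i| := by
        refine Finset.sum_le_sum fun j _ => ?_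
        rw [Matrix.mulVec, dotProduct]
        refine (Finset.abs_sum_le_sum_abs _ _).trans ?_
        refine Finset.sum_le_sum fun i _ => ?_
        rw [Matrix.transpose_apply, abs_mul, abs_of_nonneg (hM.1 i j)]
    _ = ∑ i, |v i| := by
        rw [Finset.sum_comm]
        simp [← Finset.sum_mul, hM.2]

lemma l1_transpow_mulVec_le {n : ℕ} {M : Matrix (Fin n) (Fin n) ℝ}
    (hM : RowStochastic M) (v : Fin n → ℝ) (m : ℕ) :
    l1norm ((Mᵀ ^ m).mulVec v) ≤ l1norm v := by
  induction m with
  | zero => simp [l1norm]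
  | succ m ih =>
      rw [pow_succ']
      rw [← Matrix.mulVec_mulVec]
      exact (l1_trans_mulVec_le hM _).trans ih

set_option maxHeartbeats 1000000 in
/-- Tail bound from the proof of Theorem 3: for every `k`,
`‖∑_{i=k}^∞ ((1-c)Bᵀ)^i q_offset‖₁ ≤ (2/c)(1-c)^(k+1)`. -/
theorem stmt_7 {n : ℕ} (hn : 0 < n) (A B : Matrix (Fin n) (Fin n) ℝ)
    (hA : RowStochastic A) (hB : RowStochastic B)
    (c : ℝ) (hc0 : 0 < c) (hc1 : c < 1)
    (rold : Fin n → ℝ) (hrold : l1norm rold = 1)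
    (qoffset : Fin n → ℝ)
    (hqoffset : qoffset = (1 - c) • (Bᵀ - Aᵀ).mulVec rold)
    (k : ℕ) :
    l1norm (∑' i : ℕ, (((1 - c) • Bᵀ) ^ (k + i)).mulVec qoffset) ≤
      (2 / c) * (1 - c) ^ (k + 1) := by
  have hd0 : (0:ℝ) ≤ 1 - c := by linarith
  have hd1 : (1:ℝ) - c < 1 := by linarith
  set f : ℕ → Fin n → ℝ := fun i => (((1 - c) • Bᵀ) ^ (k + i)).mulVec qoffset with hf
  -- l1norm of qoffset
  have hsmul : ∀ (a : ℝ) (v : Fin n → ℝ), l1norm (a • v) = |a| * l1norm v := by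
    intro a v
    simp [l1norm, abs_mul, Finset.mul_sum]
  have hq : l1norm qoffset ≤ 2 * (1 - c) := by
    rw [hqoffset, hsmul, abs_of_nonneg hd0]
    have : l1norm ((Bᵀ - Aᵀ).mulVec rold) ≤ 2 := by
      rw [Matrix.sub_mulVec]
      have htri : l1norm (Bᵀ.mulVec rold - Aᵀ.mulVec rold) ≤
          l1norm (Bᵀ.mulVec rold) + l1norm (Aᵀ.mulVec rold) := by
        unfold l1norm
        rw [← Finset.sum_add_distrib]
        exact Finset.sum_le_sum fun i _ => abs_sub _ _
      have h1 := l1_trans_mulVec_le hB rold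
      have h2 := l1_trans_mulVec_le hA rold
      rw [hrold] at h1 h2
      linarith
    nlinarith [this, hd0]
  -- termwise bound
  have hterm : ∀ i, l1norm (f i) ≤ 2 * (1 - c) ^ (k + i + 1) := by
    intro i
    have : f i = (1 - c) ^ (k + i) • (Bᵀ ^ (k + i)).mulVec qoffset := by
      simp only [hf, smul_pow, Matrix.smul_mulVec]
    rw [this, hsmul, abs_of_nonneg (pow_nonneg hd0 _)]
    have := l1_transpow_mulVec_le hB qoffset (k + i)
    calc (1 - c) ^ (k + i) * l1norm ((Bᵀ ^ (k + i)).mulVec qoffset)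
        ≤ (1 - c) ^ (k + i) * (2 * (1 - c)) := by
          exact mul_le_mul_of_nonneg_left (this.trans hq) (pow_nonneg hd0 _)
      _ = 2 * (1 - c) ^ (k + i + 1) := by ring
  have hl1nonneg : ∀ (v : Fin n → ℝ), 0 ≤ l1norm v := fun v =>
    Finset.sum_nonneg fun i _ => abs_nonneg _
  -- summability of geometric bound
  have hgeo : Summable fun i : ℕ => 2 * (1 - c) ^ (k + i + 1) := by
    have : Summable fun i : ℕ => (1 - c) ^ i := summable_geometric_of_lt_one hd0 hd1
    have := (this.mul_left (2 * (1 - c) ^ (k + 1)))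
    refine this.congr fun i => ?_
    ring
  have hcoord : ∀ j, Summable fun i => f i j := by
    intro j
    refine Summable.of_norm_bounded hgeo fun i => ?_
    have : |f i j| ≤ l1norm (f i) :=
      Finset.single_le_sum (f := fun j => |f i j|) (fun j _ => abs_nonneg _) (Finset.mem_univ j)
    exact this.trans (hterm i)
  have habs : ∀ j, Summable fun i => |f i j| := fun j => (hcoord j).abs
  have hsumf : Summable f := Pi.summable.mpr hcoord
  have hl1f : Summable fun i => l1norm (f i) := by
    refine Summable.of_nonneg_of_le (fun i => hl1nonneg _) hterm hgeo
  have e1 : l1norm (∑' i, f i) = ∑ j, |∑' i, f i j| := by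
    unfold l1norm
    congr 1
    ext j
    rw [tsum_apply hsumf]
  have e2 : ∑ j, |∑' i, f i j| ≤ ∑ j, ∑' i, |f i j| := by
    refine Finset.sum_le_sum fun j _ => ?_
    have := norm_tsum_le_tsum_norm (f := fun i => f i j) (by simpa [Real.norm_eq_abs] using habs j)
    simpa [Real.norm_eq_abs] using this
  have e3 : ∑ j, ∑' i, |f i j| = ∑' i, l1norm (f i) := by
    unfold l1norm
    rw [← Summable.tsum_finsetSum (fun j _ => habs j)]
  have e4 : ∑' i, l1norm (f i) ≤ ∑' i, 2 * (1 - c) ^ (k + i + 1) := Summable.tsum_le_tsum hterm hl1f hgeo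
  have e5 : ∑' i : ℕ, 2 * (1 - c) ^ (k + i + 1) = (2 / c) * (1 - c) ^ (k + 1) := by
    have hfun : (fun i : ℕ => 2 * (1 - c) ^ (k + i + 1)) =
        fun i : ℕ => (2 * (1 - c) ^ (k + 1)) * (1 - c) ^ i := by
      ext i; ring
    rw [hfun, tsum_mul_left, tsum_geometric_of_lt_one hd0 hd1]
    field_simp
    rw [sub_sub_cancel, mul_div_cancel_left₀ _ hc0.ne']
  linarith [e1, e2, e3.le, e4, e5.le]
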